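/- For all natural numbers n and m satisfying (n, m) ≠ (0, 1) and n + 1 ≥ m, we have F_n·⌊Φ^m⌋ ≤ F_{n+m} ≤ F_n·⌈Φ^m⌉, where Φ = (1 + √5)/2 and F_n is the n-th Fibonacci number. -/

import Mathlib

open Real

local notation "gφ" => goldenRatio
local notation "gψ" => goldenConj

noncomputable def Phi : ℝ := (1 + Real.sqrt 5) / 2

lemma Phi_eq : Phi = goldenRatio := rfl

lemma binet (k : ℕ) : (Nat.fib k : ℝ) * √5 = gφ ^ k - gψ ^ k := by
  rw [Real.coe_fib_eq]
  have h5 : (0:ℝ) < √5 := Real.sqrt_pos.2 (by norm_num)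
  field_simp

lemma lucas (j : ℕ) : ((Nat.fib (j+2) + Nat.fib j : ℕ) : ℝ) = gφ ^ (j+1) + gψ ^ (j+1) := by
  have h5 : (0:ℝ) < √5 := Real.sqrt_pos.2 (by norm_num)
  have h5sq : √5 * √5 = 5 := Real.mul_self_sqrt (by norm_num)
  have h1 := binet (j+2)
  have h2 := binet j
  have hphi : √5 * gφ = gφ + 2 := by unfold goldenRatio; nlinarith
  have hpsi : √5 * gψ = -(gψ + 2) := by unfold goldenConj; nlinarith
  have key : ((Nat.fib (j+2) + Nat.fib j : ℕ) : ℝ) * √5 = (gφ ^ (j+1) + gψ ^ (j+1)) * √5 := by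
    push_cast
    have g1 : gφ^(j+2) = gφ^j * (gφ + 1) := by rw [pow_add, goldenRatio_sq]
    have g2 : gψ^(j+2) = gψ^j * (gψ + 1) := by rw [pow_add, goldenConj_sq]
    have e3 : gφ ^ (j+1) = gφ^j * gφ := by ring
    have e4 : gψ ^ (j+1) = gψ^j * gψ := by ring
    rw [g1, g2] at h1
    rw [add_mul, h1, h2, e3, e4]
    linear_combination (-gφ^j) * hphi + (-gψ^j) * hpsi
  exact mul_right_cancel₀ (ne_of_gt h5) key

lemma keyA (j k : ℕ) : (Nat.fib (j+1+k+(j+1)) : ℝ)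
    = Nat.fib (j+1+k) * (Nat.fib (j+2) + Nat.fib j) - (-1)^(j+1) * Nat.fib k := by
  have h5 : (0:ℝ) < √5 := Real.sqrt_pos.2 (by norm_num)
  have hb1 := binet (j+1+k+(j+1))
  have hb2 := binet (j+1+k)
  have hb3 := binet k
  have hl := lucas j
  push_cast at hl
  have hpow : gφ^(j+1) * gψ^(j+1) = (-1:ℝ)^(j+1) := by
    rw [← mul_pow, goldenRatio_mul_goldenConj]
  apply mul_right_cancel₀ (ne_of_gt h5)
  linear_combination hb1 - (gφ^(j+1) + gψ^(j+1)) * hb2 + (-1:ℝ)^(j+1) * hb3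
    - ((Nat.fib (j+1+k) : ℝ) * √5) * hl - (gφ^k - gψ^k) * hpow

lemma keyB (j : ℕ) : (Nat.fib (j + (j+1)) : ℝ)
    = Nat.fib j * (Nat.fib (j+2) + Nat.fib j) - (-1)^(j+1) := by
  have h5 : (0:ℝ) < √5 := Real.sqrt_pos.2 (by norm_num)
  have hb1 := binet (j + (j+1))
  have hb2 := binet j
  have hl := lucas j
  push_cast at hl
  have hpow : gφ^j * gψ^j = (-1:ℝ)^j := by rw [← mul_pow, goldenRatio_mul_goldenConj]
  have hgold : gφ - gψ = √5 := goldenRatio_sub_goldenConj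
  have hmul : gφ * gψ = -1 := goldenRatio_mul_goldenConj
  have h5sq : √5 * √5 = 5 := Real.mul_self_sqrt (by norm_num)
  apply mul_right_cancel₀ (ne_of_gt h5)
  linear_combination hb1 - (gφ^(j+1) + gψ^(j+1)) * hb2 - ((Nat.fib j : ℝ) * √5) * hl
    + (gφ^j * gψ^j) * hgold + √5 * hpow + (gφ^j * gψ^j * √5) * hmul
    + (√5 * gφ^j * gψ^j / 4) * h5sq

lemma psi_pow_lt_one (j : ℕ) : |gψ ^ (j+1)| < 1 := by
  have h1 : |goldenConj| < 1 := by
    rw [abs_lt]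
    constructor
    · exact neg_one_lt_goldenConj
    · linarith [goldenConj_neg]
  calc |gψ ^ (j+1)| = |goldenConj| ^ (j+1) := by rw [abs_pow]
    _ < 1 := pow_lt_one₀ (abs_nonneg _) h1 (Nat.succ_ne_zero j)

lemma phi_pow_eq (j : ℕ) :
    gφ ^ (j+1) = ((Nat.fib (j+2) + Nat.fib j : ℕ) : ℝ) - gψ ^ (j+1) := by
  rw [lucas]; ring

lemma floor_phi_even (j : ℕ) (hj : Even (j+1)) :
    ⌊gφ ^ (j+1)⌋ = (Nat.fib (j+2) + Nat.fib j : ℤ) - 1 ∧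
    ⌈gφ ^ (j+1)⌉ = (Nat.fib (j+2) + Nat.fib j : ℤ) := by
  have hpos : 0 < gψ ^ (j+1) := hj.pow_pos goldenConj_ne_zero
  have hlt : gψ ^ (j+1) < 1 := lt_of_abs_lt (psi_pow_lt_one j)
  have hx := phi_pow_eq j
  constructor
  · rw [Int.floor_eq_iff]
    constructor
    · push_cast; push_cast at hx; linarith
    · push_cast; push_cast at hx; linarith
  · rw [Int.ceil_eq_iff]
    constructor
    · push_cast; push_cast at hx; linarith
    · push_cast; push_cast at hx; linarith

lemma floor_phi_odd (j : ℕ) (hj : Odd (j+1)) :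
    ⌊gφ ^ (j+1)⌋ = (Nat.fib (j+2) + Nat.fib j : ℤ) ∧
    ⌈gφ ^ (j+1)⌉ = (Nat.fib (j+2) + Nat.fib j : ℤ) + 1 := by
  have hneg : gψ ^ (j+1) < 0 := hj.pow_neg goldenConj_neg
  have hgt : -1 < gψ ^ (j+1) := neg_lt_of_abs_lt (psi_pow_lt_one j)
  have hx := phi_pow_eq j
  constructor
  · rw [Int.floor_eq_iff]
    constructor
    · push_cast; push_cast at hx; linarith
    · push_cast; push_cast at hx; linarith
  · rw [Int.ceil_eq_iff]
    constructor
    · push_cast; push_cast at hx; linarith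
    · push_cast; push_cast at hx; linarith

theorem fib_add_between (n m : ℕ) (hnm : (n, m) ≠ (0, 1)) (h : m ≤ n + 1) :
    (Nat.fib n : ℤ) * ⌊Phi ^ m⌋ ≤ Nat.fib (n + m) ∧
    (Nat.fib (n + m) : ℤ) ≤ Nat.fib n * ⌈Phi ^ m⌉ := by
  rw [Phi_eq]
  rcases m with _ | j
  · simp
  · -- m = j + 1
    set L : ℤ := (Nat.fib (j+2) : ℤ) + Nat.fib j with hL
    by_cases hn : j + 1 ≤ n
    · -- n ≥ m
      obtain ⟨k, hk⟩ : ∃ k, n = j + 1 + k := ⟨n - (j+1), by omega⟩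
      have hZ : (Nat.fib (n + (j+1)) : ℤ)
          = Nat.fib n * L - (-1)^(j+1) * Nat.fib k := by
        have := keyA j k
        rw [hk]; exact_mod_cast this
      have hfk : (Nat.fib k : ℤ) ≤ Nat.fib n := by
        exact_mod_cast Nat.fib_mono (by omega : k ≤ n)
      have hfk0 : (0:ℤ) ≤ Nat.fib k := Int.ofNat_nonneg _
      rcases Nat.even_or_odd (j+1) with hp | hp
      · obtain ⟨hfl, hce⟩ := floor_phi_even j hp
        rw [hfl, hce]
        have hs : ((-1:ℤ))^(j+1) = 1 := hp.neg_one_pow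
        rw [hs] at hZ
        constructor <;> nlinarith [hZ, hfk, hfk0]
      · obtain ⟨hfl, hce⟩ := floor_phi_odd j hp
        rw [hfl, hce]
        have hs : ((-1:ℤ))^(j+1) = -1 := hp.neg_one_pow
        rw [hs] at hZ
        constructor <;> nlinarith [hZ, hfk, hfk0]
    · -- n = j
      have hnj : n = j := by omega
      subst hnj
      have hZ : (Nat.fib (n + (n+1)) : ℤ) = Nat.fib n * L - (-1)^(n+1) := by
        have := keyB n
        exact_mod_cast this
      rcases Nat.even_or_odd (n+1) with hp | hp
      · obtain ⟨hfl, hce⟩ := floor_phi_even n hp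
        rw [hfl, hce]
        have hs : ((-1:ℤ))^(n+1) = 1 := hp.neg_one_pow
        rw [hs] at hZ
        have hn1 : 1 ≤ n := by
          rcases hp with ⟨t, ht⟩; omega
        have hfn : (1:ℤ) ≤ Nat.fib n := by
          exact_mod_cast Nat.fib_pos.mpr (by omega)
        constructor <;> nlinarith [hZ, hfn]
      · obtain ⟨hfl, hce⟩ := floor_phi_odd n hp
        rw [hfl, hce]
        have hs : ((-1:ℤ))^(n+1) = -1 := hp.neg_one_pow
        rw [hs] at hZ
        have hn1 : 1 ≤ n := by
          rcases Nat.eq_zero_or_pos n with h0 | h0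
          · exfalso; apply hnm; rw [h0]
          · exact h0
        have hfn : (1:ℤ) ≤ Nat.fib n := by
          exact_mod_cast Nat.fib_pos.mpr (by omega)
        constructor <;> nlinarith [hZ, hfn]
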